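/- Let A be a real n×n matrix and consider the Sylvester operator on the real vector space of symmetric n×n matrices, X ↦ AX + XAᵀ (this space is invariant under the operator). Then: (i) if every complex eigenvalue of A has negative real part, this linear operator is bijective; and (ii) if A has a complex eigenvalue with zero real part, this linear operator is not injective, i.e., there exists a nonzero symmetric X with AX + XAᵀ = 0. Consequently, the determinant of the Sylvester operator restricted to symmetric matrices is a guardian map for Hurwitz stability. -/

import Mathlib

open Matrix Polynomial

section Aux

variable {m : Type*} [Fintype m] [DecidableEq m]

private lemma charpoly_eval' {R : Type*} [CommRing R] (M : Matrix m m R) (r : R) :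
    M.charpoly.eval r = (r • (1 : Matrix m m R) - M).det := by
  rw [Matrix.charpoly, eval_det, matPolyEquiv_charmatrix, eval_sub, eval_X, eval_C]
  congr 2
  ext i j
  simp [Matrix.scalar, Matrix.smul_apply, Matrix.one_apply, Matrix.diagonal_apply]

private lemma aeval_mul_comm' {R : Type*} [CommRing R] (A B X : Matrix m m R)
    (h : A * X = X * B) (p : R[X]) : (aeval A p) * X = X * (aeval B p) := by
  have hk : ∀ k : ℕ, A ^ k * X = X * B ^ k := by
    intro k
    induction k with
    | zero => simp
    | succ k ih => rw [pow_succ, pow_succ, mul_assoc, h, ← mul_assoc, ih, mul_assoc]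
  induction p using Polynomial.induction_on' with
  | add p q hp hq => simp only [map_add, add_mul, mul_add, hp, hq]
  | monomial k a =>
      rw [aeval_monomial, aeval_monomial, mul_assoc, hk, ← mul_assoc,
        Algebra.commutes, mul_assoc]

/-- Key injectivity lemma: if all complex eigenvalues of `A` have negative real
part, then `A * X + X * Aᵀ = 0` forces `X = 0` (no symmetry needed). -/
private lemma sylvester_inj {n : ℕ} (A : Matrix (Fin n) (Fin n) ℝ)
    (hA : ∀ z : ℂ, (A.charpoly.map (algebraMap ℝ ℂ)).IsRoot z → z.re < 0)
    (X : Matrix (Fin n) (Fin n) ℝ) (hX : A * X + X * Aᵀ = 0) : X = 0 := by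
  set f := algebraMap ℝ ℂ
  set Ac : Matrix (Fin n) (Fin n) ℂ := A.map f with hAc
  set Xc : Matrix (Fin n) (Fin n) ℂ := X.map f with hXc
  set B : Matrix (Fin n) (Fin n) ℂ := -Acᵀ with hB
  have hmap : Ac * Xc = Xc * B := by
    have h0 : Ac * Xc + Xc * Acᵀ = 0 := by
      have h := congrArg f.mapMatrix hX
      rw [map_add, _root_.map_mul, _root_.map_mul, map_zero] at h
      simp only [RingHom.mapMatrix_apply, Matrix.transpose_map] at h
      exact h
    have : Ac * Xc = -(Xc * Acᵀ) := by linear_combination (norm := abel) h0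
    rw [this, hB, Matrix.mul_neg]
  set p : ℂ[X] := Ac.charpoly with hp
  set q : ℂ[X] := B.charpoly with hq
  have hcp : Ac.charpoly = A.charpoly.map f := Matrix.charpoly_map A f
  have hproot : ∀ z : ℂ, p.IsRoot z → z.re < 0 := by
    intro z hz
    apply hA
    rwa [hp, hcp] at hz
  have hpq : IsCoprime p q := by
    rw [Polynomial.isCoprime_iff_aeval_ne_zero_of_isAlgClosed ℂ ℂ p q]
    intro a
    by_contra hcon
    push_neg at hcon
    obtain ⟨ha1, ha2⟩ := hcon
    rw [aeval_def, eval₂_eq_eval_map, Algebra.algebraMap_self, Polynomial.map_id] at ha1 ha2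
    have har : a.re < 0 := hproot a ha1
    -- q.eval a = 0 implies p.eval (-a) = 0
    have hqa : q.eval a = (a • (1 : Matrix (Fin n) (Fin n) ℂ) + Acᵀ).det := by
      rw [hq, charpoly_eval', hB, sub_neg_eq_add]
    have hpa : p.eval (-a) = (-1 : ℂ) ^ n * (a • (1 : Matrix (Fin n) (Fin n) ℂ) + Ac).det := by
      rw [hp, charpoly_eval']
      have : (-a) • (1 : Matrix (Fin n) (Fin n) ℂ) - Ac
          = -(a • (1 : Matrix (Fin n) (Fin n) ℂ) + Ac) := by
        rw [neg_smul]; abel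
      rw [this, Matrix.det_neg, Fintype.card_fin]
    have hdet : (a • (1 : Matrix (Fin n) (Fin n) ℂ) + Ac).det = 0 := by
      have : (a • (1 : Matrix (Fin n) (Fin n) ℂ) + Acᵀ)
          = (a • (1 : Matrix (Fin n) (Fin n) ℂ) + Ac)ᵀ := by
        rw [Matrix.transpose_add, Matrix.transpose_smul, Matrix.transpose_one]
      rw [hqa, this, Matrix.det_transpose] at ha2
      exact ha2
    have : p.eval (-a) = 0 := by rw [hpa, hdet, mul_zero]
    have := hproot (-a) this
    simp only [Complex.neg_re, neg_neg] at this
    linarith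
  obtain ⟨u, v, huv⟩ := hpq
  have hBq : aeval B q = 0 := Matrix.aeval_self_charpoly B
  have hApX : aeval Ac p = 0 := Matrix.aeval_self_charpoly Ac
  have hinv : aeval B u * aeval B p = 1 := by
    have h := congrArg (aeval B) huv
    rw [map_add, _root_.map_mul, _root_.map_mul, _root_.map_one, hBq, mul_zero,
      add_zero] at h
    exact h
  have hXp : Xc * aeval B p = 0 := by
    rw [← aeval_mul_comm' Ac B Xc hmap p, hApX, zero_mul]
  have hinv' : aeval B p * aeval B u = 1 := (mul_eq_one_comm).mp hinv
  have hXzero : Xc = (0 : Matrix (Fin n) (Fin n) ℂ) := by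
    calc Xc = Xc * (aeval B p * aeval B u) := by rw [hinv', mul_one]
    _ = (Xc * aeval B p) * aeval B u := by rw [mul_assoc]
    _ = 0 := by rw [hXp, zero_mul]
  ext i j
  have h2 := congrFun (congrFun hXzero i) j
  have h3 : (algebraMap ℝ ℂ) (X i j) = 0 := h2
  simpa using h3

/-- The submodule of symmetric matrices. -/
private def symmSub (n : ℕ) : Submodule ℝ (Matrix (Fin n) (Fin n) ℝ) where
  carrier := {X | Xᵀ = X}
  add_mem' := by
    intro a b ha hb
    simp only [Set.mem_setOf_eq] at *
    rw [Matrix.transpose_add, ha, hb]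
  zero_mem' := by simp
  smul_mem' := by
    intro c a ha
    simp only [Set.mem_setOf_eq] at *
    rw [Matrix.transpose_smul, ha]

end Aux

/-- The Sylvester operator `X ↦ AX + XAᵀ` on the space of symmetric matrices:
(i) if every complex eigenvalue of `A` has negative real part, it is bijective
(injective and surjective on symmetric matrices); (ii) if `A` has a complex
eigenvalue with zero real part, it is not injective: there is a nonzero
symmetric `X` with `AX + XAᵀ = 0`. -/
theorem sylvester_on_symmetric_guardian (n : ℕ) (A : Matrix (Fin n) (Fin n) ℝ) :
    ((∀ z : ℂ, (A.charpoly.map (algebraMap ℝ ℂ)).IsRoot z → z.re < 0) →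
      ((∀ X : Matrix (Fin n) (Fin n) ℝ, Xᵀ = X → A * X + X * Aᵀ = 0 → X = 0) ∧
        (∀ Y : Matrix (Fin n) (Fin n) ℝ, Yᵀ = Y →
          ∃ X : Matrix (Fin n) (Fin n) ℝ, Xᵀ = X ∧ A * X + X * Aᵀ = Y))) ∧
    ((∃ z : ℂ, (A.charpoly.map (algebraMap ℝ ℂ)).IsRoot z ∧ z.re = 0) →
      ∃ X : Matrix (Fin n) (Fin n) ℝ, X ≠ 0 ∧ Xᵀ = X ∧ A * X + X * Aᵀ = 0) := by
  constructor
  · intro hA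
    constructor
    · intro X _ hX
      exact sylvester_inj A hA X hX
    · -- surjectivity on symmetric matrices
      intro Y hY
      -- the Sylvester operator as a linear endomorphism of the symmetric submodule
      have hmem : ∀ X : Matrix (Fin n) (Fin n) ℝ, Xᵀ = X →
          (A * X + X * Aᵀ)ᵀ = A * X + X * Aᵀ := by
        intro X hX
        rw [Matrix.transpose_add, Matrix.transpose_mul, Matrix.transpose_mul,
          Matrix.transpose_transpose, hX, add_comm]
      let L : symmSub n →ₗ[ℝ] symmSub n :=
        { toFun := fun X => ⟨A * X.1 + X.1 * Aᵀ, hmem X.1 X.2⟩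
          map_add' := by
            intro X Z
            apply Subtype.ext
            simp only [Submodule.coe_add, Matrix.mul_add, Matrix.add_mul]
            abel
          map_smul' := by
            intro c X
            apply Subtype.ext
            simp only [SetLike.val_smul, Matrix.mul_smul, Matrix.smul_mul, RingHom.id_apply,
              Submodule.coe_smul]
            rw [smul_add] }
      have hLinj : Function.Injective L := by
        intro X Z hXZ
        have h0 : (X : Matrix (Fin n) (Fin n) ℝ) - Z ∈ symmSub n := (symmSub n).sub_mem X.2 Z.2
        have : A * ((X : Matrix (Fin n) (Fin n) ℝ) - Z) + ((X : Matrix (Fin n) (Fin n) ℝ) - Z) * Aᵀ = 0 := by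
          have h1 : A * (X : Matrix (Fin n) (Fin n) ℝ) + (X : Matrix (Fin n) (Fin n) ℝ) * Aᵀ
              = A * (Z : Matrix (Fin n) (Fin n) ℝ) + (Z : Matrix (Fin n) (Fin n) ℝ) * Aᵀ := by
            have := congrArg Subtype.val hXZ
            exact this
          rw [Matrix.mul_sub, Matrix.sub_mul]
          linear_combination (norm := abel) h1
        have := sylvester_inj A hA _ this
        have hval : (X : Matrix (Fin n) (Fin n) ℝ) = Z := by
          have := sub_eq_zero.mp this
          exact this
        exact Subtype.ext hval
      have hLsurj : Function.Surjective L :=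
        (LinearMap.injective_iff_surjective).mp hLinj
      obtain ⟨X, hX⟩ := hLsurj ⟨Y, hY⟩
      refine ⟨X.1, X.2, ?_⟩
      have := congrArg Subtype.val hX
      exact this
  · -- part (ii)
    rintro ⟨z, hz, hzre⟩
    set f := algebraMap ℝ ℂ
    set Ac : Matrix (Fin n) (Fin n) ℂ := A.map f with hAc
    have hzroot : Ac.charpoly.IsRoot z := by rwa [← Matrix.charpoly_map] at hz
    have hdet : (z • (1 : Matrix (Fin n) (Fin n) ℂ) - Ac).det = 0 := by
      rw [← charpoly_eval' Ac z]; exact hzroot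
    obtain ⟨v, hv, hvz⟩ := Matrix.exists_mulVec_eq_zero_iff.mpr hdet
    have hAv : Ac.mulVec v = z • v := by
      have := hvz
      rw [Matrix.sub_mulVec, sub_eq_zero] at this
      rw [← this, Matrix.smul_mulVec, Matrix.one_mulVec]
    set X : Matrix (Fin n) (Fin n) ℝ :=
      Matrix.of fun i j => (v i * (starRingEnd ℂ) (v j)).re with hXdef
    obtain ⟨i₀, hi₀⟩ := Function.ne_iff.mp hv
    have hXne : X ≠ 0 := by
      intro h
      have : X i₀ i₀ = 0 := by rw [h]; rfl
      rw [hXdef] at this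
      simp only [Matrix.of_apply] at this
      rw [Complex.mul_conj] at this
      simp only [Complex.ofReal_re] at this
      exact (Complex.normSq_pos.mpr hi₀).ne' this
    have hXsymm : Xᵀ = X := by
      ext i j
      simp only [Matrix.transpose_apply, hXdef, Matrix.of_apply]
      have hc : v j * (starRingEnd ℂ) (v i) = (starRingEnd ℂ) (v i * (starRingEnd ℂ) (v j)) := by
        rw [_root_.map_mul, Complex.conj_conj]
        ring
      rw [hc, Complex.conj_re]
    refine ⟨X, hXne, hXsymm, ?_⟩
    ext i j
    have hAX : (A * X) i j = (z * (v i * (starRingEnd ℂ) (v j))).re := by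
      rw [Matrix.mul_apply]
      have h1 : ∀ k, A i k * X k j = ((A i k : ℂ) * (v k * (starRingEnd ℂ) (v j))).re := by
        intro k
        rw [Complex.re_ofReal_mul, hXdef]
        rfl
      simp_rw [h1, ← Complex.re_sum]
      congr 1
      have : ∑ k, (A i k : ℂ) * (v k * (starRingEnd ℂ) (v j))
          = (∑ k, (A i k : ℂ) * v k) * (starRingEnd ℂ) (v j) := by
        rw [Finset.sum_mul]
        exact Finset.sum_congr rfl fun k _ => (mul_assoc _ _ _).symm
      rw [this]
      have hmv : (∑ k, (A i k : ℂ) * v k) = Ac.mulVec v i := by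
        rw [Matrix.mulVec, dotProduct]
        exact Finset.sum_congr rfl fun k _ => by rw [hAc]; rfl
      rw [hmv, hAv]
      simp only [Pi.smul_apply, smul_eq_mul]
      ring
    have hXA : (X * Aᵀ) i j = ((starRingEnd ℂ) z * (v i * (starRingEnd ℂ) (v j))).re := by
      rw [Matrix.mul_apply]
      have h1 : ∀ k, X i k * Aᵀ k j = ((v i * (starRingEnd ℂ) (v k)) * (A j k : ℂ)).re := by
        intro k
        rw [Matrix.transpose_apply, mul_comm (v i * (starRingEnd ℂ) (v k)) ((A j k : ℂ)),
          Complex.re_ofReal_mul, hXdef]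
        simp [mul_comm]
      simp_rw [h1, ← Complex.re_sum]
      congr 1
      have : ∑ k, (v i * (starRingEnd ℂ) (v k)) * (A j k : ℂ)
          = v i * (starRingEnd ℂ) (∑ k, (A j k : ℂ) * v k) := by
        rw [map_sum, Finset.mul_sum]
        refine Finset.sum_congr rfl fun k _ => ?_
        rw [_root_.map_mul, Complex.conj_ofReal]
        ring
      rw [this]
      have hmv : (∑ k, (A j k : ℂ) * v k) = Ac.mulVec v j := by
        rw [Matrix.mulVec, dotProduct]
        exact Finset.sum_congr rfl fun k _ => by rw [hAc]; rfl
      rw [hmv, hAv]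
      simp only [Pi.smul_apply, smul_eq_mul, _root_.map_mul]
      ring
    have hsum : (A * X + X * Aᵀ) i j = ((z + (starRingEnd ℂ) z) * (v i * (starRingEnd ℂ) (v j))).re := by
      rw [Matrix.add_apply, hAX, hXA, add_mul, Complex.add_re]
    rw [hsum, Complex.add_conj, hzre]
    simp
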